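/- Let N ≥ 5 and -4 < τ. For radial u ∈ C_c²(B_R \ {0}) with u(x) = U(|x|), under the substitution U(r) = r^{-(N'-4)/2} w(t), t = -ln r (where N' = N + α, 4-N < α < N), one has ∫_{B_R} |x|^α (Δu)² dx = ω_N ∫_{-ln R}^∞ ( |w''|² + 2δ̃_α |w'|² + δ_α |w|² ) dt, where ω_N = |S^{N-1}|, δ̃_α = ((N-2)/2)² + ((α-2)/2)², and δ_α = [((N-2)/2)² - ((α-2)/2)²]². -/

import Mathlib

open Set MeasureTheory

/-- Derivative of `s ↦ s^c * v (-log s)` at `r > 0`. -/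
lemma aux_hasDerivAt (c : ℝ) (v : ℝ → ℝ) (hv : Differentiable ℝ v) {r : ℝ} (hr : 0 < r) :
    HasDerivAt (fun s : ℝ => s ^ c * v (-Real.log s))
      (r ^ (c - 1) * (c * v (-Real.log r) - deriv v (-Real.log r))) r := by
  have h1 : HasDerivAt (fun s : ℝ => s ^ c) (c * r ^ (c - 1)) r :=
    Real.hasDerivAt_rpow_const (Or.inl hr.ne')
  have h2 : HasDerivAt (fun s : ℝ => -Real.log s) (-r⁻¹) r :=
    (Real.hasDerivAt_log hr.ne').neg
  have h3 : HasDerivAt (fun s : ℝ => v (-Real.log s))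
      (deriv v (-Real.log r) * -r⁻¹) r := (hv _).hasDerivAt.comp r h2
  have h4 := h1.mul h3
  refine h4.congr_deriv ?_
  have hrc : r ^ c * r⁻¹ = r ^ (c - 1) := by
    rw [← Real.rpow_neg_one r, ← Real.rpow_add hr]
    ring_nf
  have : r ^ c * (deriv v (-Real.log r) * -r⁻¹)
      = -(r ^ (c - 1) * deriv v (-Real.log r)) := by
    rw [show r ^ c * (deriv v (-Real.log r) * -r⁻¹)
        = -((r ^ c * r⁻¹) * deriv v (-Real.log r)) by ring, hrc]
  rw [this]
  ring

lemma aux_integral_deriv_zero {φ : ℝ → ℝ} (hφ : ContDiff ℝ 1 φ) (hcs : HasCompactSupport φ)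
    {b : ℝ} (hb : φ b = 0) : ∫ t in Ioi b, deriv φ t = 0 := by
  rw [hcs.integral_Ioi_deriv_eq hφ b, hb, neg_zero]

theorem stmt_15 (N : ℕ) (hN : 5 ≤ N) (α R : ℝ)
    (hα1 : 4 - (N : ℝ) < α) (hα2 : α < N) (hR : 0 < R)
    (w : ℝ → ℝ) (hw : ContDiff ℝ 2 w) (hwcs : HasCompactSupport w)
    (hwsupp : tsupport w ⊆ Ioi (-Real.log R))
    (U : ℝ → ℝ)
    (hU : ∀ r ∈ Ioi (0:ℝ), U r = r ^ (-(((N : ℝ) + α - 4) / 2)) * w (-Real.log r)) :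
    (∫ x in Metric.ball (0 : EuclideanSpace ℝ (Fin N)) R,
        ‖x‖ ^ α * (deriv (deriv U) ‖x‖ + ((N : ℝ) - 1) / ‖x‖ * deriv U ‖x‖) ^ 2) =
      ((N : ℝ) * (volume (Metric.ball (0 : EuclideanSpace ℝ (Fin N)) 1)).toReal) *
        ∫ t in Ioi (-Real.log R),
          (deriv (deriv w) t) ^ 2 +
            2 * ((((N : ℝ) - 2) / 2) ^ 2 + ((α - 2) / 2) ^ 2) * (deriv w t) ^ 2 +
            ((((N : ℝ) - 2) / 2) ^ 2 - ((α - 2) / 2) ^ 2) ^ 2 * (w t) ^ 2 := by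
  set b0 : ℝ := -Real.log R with hb0
  set γ : ℝ := ((N : ℝ) + α - 4) / 2 with hγ
  set w1 : ℝ → ℝ := deriv w with hw1def
  set w2 : ℝ → ℝ := deriv w1 with hw2def
  have hwd : Differentiable ℝ w := hw.differentiable (by norm_num)
  have hw1C : ContDiff ℝ 1 w1 := by
    have := (contDiff_succ_iff_deriv (n := 1)).mp (by norm_num1; exact hw)
    exact this.2.2
  have hw1d : Differentiable ℝ w1 := hw1C.differentiable (by norm_num)
  have hw2c : Continuous w2 := hw1C.continuous_deriv le_rfl
  have hw1cs : HasCompactSupport w1 := hwcs.deriv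
  have hw2cs : HasCompactSupport w2 := hw1cs.deriv
  -- vanishing outside `tsupport w`
  have hvan : ∀ t ∉ tsupport w, w t = 0 ∧ w1 t = 0 ∧ w2 t = 0 := by
    intro t ht
    have h1 : w t = 0 := image_eq_zero_of_notMem_tsupport ht
    have h2 : w1 t = 0 := by
      by_contra h
      exact ht (support_deriv_subset (by simpa [hw1def, Function.mem_support] using h))
    have h3 : w2 t = 0 := by
      by_contra h
      have : t ∈ tsupport w1 := support_deriv_subset (by simpa [Function.mem_support] using h)
      exact ht (closure_minimal support_deriv_subset (isClosed_tsupport w) this)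
    exact ⟨h1, h2, h3⟩
  have hvanb : ∀ t, t ∉ Ioi b0 → w t = 0 ∧ w1 t = 0 ∧ w2 t = 0 := fun t ht =>
    hvan t (fun h => ht (hwsupp h))
  -- the combination g
  set a : ℝ := α - 2 with ha
  set bb : ℝ := ((α - 2) ^ 2 - ((N : ℝ) - 2) ^ 2) / 4 with hbb
  set g : ℝ → ℝ := fun t => w2 t + a * w1 t + bb * w t with hg
  -- first derivative of U
  set V : ℝ → ℝ := fun s => s ^ (-γ - 1) * ((-γ) * w (-Real.log s) - w1 (-Real.log s)) with hV
  set v : ℝ → ℝ := fun t => (-γ) * w t - w1 t with hv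
  have hvd : Differentiable ℝ v := (hwd.const_mul _).sub hw1d
  have hvderiv : ∀ t, deriv v t = (-γ) * w1 t - w2 t := by
    intro t
    rw [hv]
    exact (((hwd t).hasDerivAt.const_mul _).sub (hw1d t).hasDerivAt).deriv
  have hderivU : ∀ r ∈ Ioi (0 : ℝ), deriv U r = V r := by
    intro r hr
    have hr : (0 : ℝ) < r := hr
    have hev : U =ᶠ[nhds r] fun s => s ^ (-γ) * w (-Real.log s) := by
      filter_upwards [Ioi_mem_nhds hr] with s hs
      simpa using hU s hs
    rw [hev.deriv_eq]
    have := (aux_hasDerivAt (-γ) w hwd hr).deriv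
    rw [this]
  have hderiv2U : ∀ r ∈ Ioi (0 : ℝ), deriv (deriv U) r
      = r ^ (-γ - 2) * (γ * (γ + 1) * w (-Real.log r) + (2 * γ + 1) * w1 (-Real.log r)
          + w2 (-Real.log r)) := by
    intro r hr
    have hr : (0 : ℝ) < r := hr
    have hev : deriv U =ᶠ[nhds r] V := by
      filter_upwards [Ioi_mem_nhds hr] with s hs
      exact hderivU s hs
    rw [hev.deriv_eq]
    have hVeq : V = fun s => s ^ (-γ - 1) * v (-Real.log s) := rfl
    rw [hVeq]
    have := (aux_hasDerivAt (-γ - 1) v hvd hr).deriv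
    rw [this, hvderiv]
    have : -γ - 1 - 1 = -γ - 2 := by ring
    rw [this, hv]
    ring
  -- the Laplacian identity
  have hLap : ∀ r ∈ Ioi (0 : ℝ),
      deriv (deriv U) r + ((N : ℝ) - 1) / r * deriv U r
        = r ^ (-γ - 2) * g (-Real.log r) := by
    intro r hr
    have hrpos : (0 : ℝ) < r := hr
    rw [hderiv2U r hr, hderivU r hr]
    have hpow0 : r ^ (-γ - 1) / r = r ^ (-γ - 2) := by
      rw [div_eq_mul_inv, ← Real.rpow_neg_one r, ← Real.rpow_add hrpos]
      ring_nf
    have hpow : ((N : ℝ) - 1) / r * (r ^ (-γ - 1)) = ((N : ℝ) - 1) * r ^ (-γ - 2) := by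
      rw [div_mul_eq_mul_div, mul_div_assoc, hpow0]
    have : ((N : ℝ) - 1) / r * (r ^ (-γ - 1)
          * ((-γ) * w (-Real.log r) - w1 (-Real.log r)))
        = ((N : ℝ) - 1) * r ^ (-γ - 2) * ((-γ) * w (-Real.log r) - w1 (-Real.log r)) := by
      rw [← mul_assoc, hpow]
    rw [hV]
    rw [this]
    have hcoef1 : 2 * γ + 1 - ((N : ℝ) - 1) = a := by rw [hγ, ha]; ring
    have hcoef2 : γ * (γ + 1) - ((N : ℝ) - 1) * γ = bb := by rw [hγ, hbb]; ring
    rw [hg]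
    set p : ℝ := r ^ (-γ - 2) with hp
    linear_combination (p * w (-Real.log r)) * hcoef2 + (p * w1 (-Real.log r)) * hcoef1
  -- the 1D integrand identity
  have key : ∀ y ∈ Ioi (0 : ℝ), (y : ℝ) ^ (N - 1) *
      (y ^ α * (deriv (deriv U) y + ((N : ℝ) - 1) / y * deriv U y) ^ 2)
      = g (-Real.log y) ^ 2 * y⁻¹ := by
    intro y hy
    have hy : (0 : ℝ) < y := hy
    rw [hLap y hy]
    have e1 : (y : ℝ) ^ (N - 1) = y ^ ((N : ℝ) - 1) := by
      rw [← Real.rpow_natCast y (N - 1), Nat.cast_sub (by omega), Nat.cast_one]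
    have e2 : (y ^ (-γ - 2) * g (-Real.log y)) ^ 2
        = y ^ ((-γ - 2) * 2) * g (-Real.log y) ^ 2 := by
      rw [mul_pow, ← Real.rpow_natCast (y ^ (-γ - 2)) 2, ← Real.rpow_mul hy.le]
      norm_num
    rw [e1, e2]
    have e3 : y ^ ((N : ℝ) - 1) * y ^ α * y ^ ((-γ - 2) * 2) = y⁻¹ := by
      rw [← Real.rpow_add hy, ← Real.rpow_add hy,
        show ((N : ℝ) - 1) + α + (-γ - 2) * 2 = -1 by rw [hγ]; ring, Real.rpow_neg_one]
    linear_combination g (-Real.log y) ^ 2 * e3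
  -- vanishing of the radial integrand for r ≥ R
  set f : ℝ → ℝ := fun r =>
    r ^ α * (deriv (deriv U) r + ((N : ℝ) - 1) / r * deriv U r) ^ 2 with hf
  have hf0 : ∀ r : ℝ, R ≤ r → f r = 0 := by
    intro r hr
    have hrpos : (0 : ℝ) < r := lt_of_lt_of_le hR hr
    have ht : -Real.log r ∉ Ioi b0 := by
      rw [hb0, mem_Ioi, not_lt, neg_le_neg_iff]
      exact Real.log_le_log hR hr
    obtain ⟨hz0, hz1, hz2⟩ := hvanb _ ht
    have hgz : g (-Real.log r) = 0 := by rw [hg]; simp [hz0, hz1, hz2]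
    rw [hf]
    simp only
    rw [hLap r hrpos, hgz, mul_zero]
    ring
  -- pass to the whole space and use spherical coordinates
  haveI : Nonempty (Fin N) := ⟨⟨0, by omega⟩⟩
  haveI : Nontrivial (EuclideanSpace ℝ (Fin N)) := by infer_instance
  have step1 : (∫ x in Metric.ball (0 : EuclideanSpace ℝ (Fin N)) R,
      ‖x‖ ^ α * (deriv (deriv U) ‖x‖ + ((N : ℝ) - 1) / ‖x‖ * deriv U ‖x‖) ^ 2)
      = ∫ x : EuclideanSpace ℝ (Fin N), f ‖x‖ := by
    refine setIntegral_eq_integral_of_forall_compl_eq_zero fun x hx => ?_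
    have : R ≤ ‖x‖ := by
      simpa [Metric.mem_ball, dist_zero_right, not_lt] using hx
    exact hf0 _ this
  have step2 : (∫ x : EuclideanSpace ℝ (Fin N), f ‖x‖)
      = ((N : ℝ) * (volume (Metric.ball (0 : EuclideanSpace ℝ (Fin N)) 1)).toReal) *
        ∫ y in Ioi (0 : ℝ), y ^ (N - 1) * f y := by
    rw [integral_fun_norm_addHaar (volume : Measure (EuclideanSpace ℝ (Fin N))) f]
    simp only [finrank_euclideanSpace_fin, nsmul_eq_mul, smul_eq_mul]
    simp only [Measure.real]; ring
  have step3 : (∫ y in Ioi (0 : ℝ), (y : ℝ) ^ (N - 1) * f y)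
      = ∫ y in Ioi (0 : ℝ), g (-Real.log y) ^ 2 * y⁻¹ :=
    setIntegral_congr_fun measurableSet_Ioi fun y hy => key y hy
  -- substitution y = exp t
  have step4 : (∫ y in Ioi (0 : ℝ), g (-Real.log y) ^ 2 * y⁻¹)
      = ∫ t : ℝ, g t ^ 2 := by
    have himg : Real.exp '' univ = Ioi (0 : ℝ) := by
      rw [image_univ, Real.range_exp]
    have hsub := integral_image_eq_integral_abs_deriv_smul MeasurableSet.univ
      (fun x _ => (Real.hasDerivAt_exp x).hasDerivWithinAt)
      Real.exp_injective.injOn (fun y => g (-Real.log y) ^ 2 * y⁻¹)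
    rw [himg, Measure.restrict_univ] at hsub
    rw [hsub]
    have : (∫ t : ℝ, |Real.exp t| • (g (-Real.log (Real.exp t)) ^ 2 * (Real.exp t)⁻¹))
        = ∫ t : ℝ, g (-t) ^ 2 := by
      congr 1
      funext t
      rw [Real.log_exp, abs_of_pos (Real.exp_pos t), smul_eq_mul]
      field_simp
    rw [this]
    exact integral_neg_eq_self (fun t => g t ^ 2) volume
  -- the combination vanishes outside `Ioi b0`
  have hgvan : ∀ t, t ∉ Ioi b0 → g t ^ 2 = 0 := by
    intro t ht
    obtain ⟨hz0, hz1, hz2⟩ := hvanb t ht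
    rw [hg]; simp [hz0, hz1, hz2]
  have step5 : (∫ t : ℝ, g t ^ 2) = ∫ t in Ioi b0, g t ^ 2 :=
    (setIntegral_eq_integral_of_forall_compl_eq_zero hgvan).symm
  -- integration by parts
  set φ1 : ℝ → ℝ := fun t => w1 t ^ 2 with hφ1
  set φ2 : ℝ → ℝ := fun t => w t ^ 2 with hφ2
  set φ3 : ℝ → ℝ := fun t => w t * w1 t with hφ3
  have dφ1 : deriv φ1 = fun t => 2 * w1 t * w2 t := by
    funext t
    have := ((hw1d t).hasDerivAt.pow 2).deriv
    simpa [hφ1, hw2def, Pi.pow_def] using this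
  have dφ2 : deriv φ2 = fun t => 2 * w t * w1 t := by
    funext t
    have := ((hwd t).hasDerivAt.pow 2).deriv
    simpa [hφ2, hw1def, Pi.pow_def] using this
  have dφ3 : deriv φ3 = fun t => w1 t * w1 t + w t * w2 t := by
    funext t
    have := ((hwd t).hasDerivAt.mul (hw1d t).hasDerivAt).deriv
    simpa [hφ3, hw1def, hw2def, Pi.mul_def] using this
  have hwC1 : ContDiff ℝ 1 w := hw.of_le (by norm_num)
  have hφ1C : ContDiff ℝ 1 φ1 := hw1C.pow 2
  have hφ2C : ContDiff ℝ 1 φ2 := hwC1.pow 2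
  have hφ3C : ContDiff ℝ 1 φ3 := hwC1.mul hw1C
  have hφ1cs : HasCompactSupport φ1 := by
    refine hw1cs.mono' fun t ht => subset_closure ?_
    simp only [hφ1, Function.mem_support] at ht ⊢
    intro h; exact ht (by simp [h])
  have hφ2cs : HasCompactSupport φ2 := by
    refine hwcs.mono' fun t ht => subset_closure ?_
    simp only [hφ2, Function.mem_support] at ht ⊢
    intro h; exact ht (by simp [h])
  have hφ3cs : HasCompactSupport φ3 := by
    refine hwcs.mono' fun t ht => subset_closure ?_
    simp only [hφ3, Function.mem_support] at ht ⊢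
    intro h; exact ht (by simp [h])
  have hb0not : b0 ∉ Ioi b0 := by simp
  obtain ⟨hwb, hw1b, hw2b⟩ := hvanb b0 hb0not
  have int1 : (∫ t in Ioi b0, deriv φ1 t) = 0 :=
    aux_integral_deriv_zero hφ1C hφ1cs (by rw [hφ1]; simp [hw1b])
  have int2 : (∫ t in Ioi b0, deriv φ2 t) = 0 :=
    aux_integral_deriv_zero hφ2C hφ2cs (by rw [hφ2]; simp [hwb])
  have int3 : (∫ t in Ioi b0, deriv φ3 t) = 0 :=
    aux_integral_deriv_zero hφ3C hφ3cs (by rw [hφ3]; simp [hwb])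
  -- integrability helpers
  have hi : ∀ F : ℝ → ℝ, Continuous F → HasCompactSupport F → IntegrableOn F (Ioi b0) :=
    fun F hc hcs => (hc.integrable_of_hasCompactSupport hcs).integrableOn
  have hw1cont : Continuous w1 := hw1C.continuous
  have hwcont : Continuous w := hw.continuous
  set Tgt : ℝ → ℝ := fun t => w2 t ^ 2 +
      2 * ((((N : ℝ) - 2) / 2) ^ 2 + ((α - 2) / 2) ^ 2) * w1 t ^ 2 +
      ((((N : ℝ) - 2) / 2) ^ 2 - ((α - 2) / 2) ^ 2) ^ 2 * w t ^ 2 with hTgt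
  have hTgtcont : Continuous Tgt := by
    rw [hTgt]
    fun_prop
  have hTgtcs : HasCompactSupport Tgt := by
    refine hwcs.mono' fun t ht => ?_
    by_contra h
    obtain ⟨hz0, hz1, hz2⟩ := hvan t h
    simp [hTgt, Function.mem_support, hz0, hz1, hz2] at ht
  set Cmb : ℝ → ℝ := fun t => a * deriv φ1 t + (a * bb) * deriv φ2 t
      + (2 * bb) * deriv φ3 t with hCmb
  have hCmb1 : Continuous fun t => a * deriv φ1 t := by
    rw [dφ1]; fun_prop
  have hCmb2 : Continuous fun t => (a * bb) * deriv φ2 t := by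
    rw [dφ2]; fun_prop
  have hCmb3 : Continuous fun t => (2 * bb) * deriv φ3 t := by
    rw [dφ3]; fun_prop
  have hCmbcont : Continuous Cmb := by
    rw [hCmb]; exact (hCmb1.add hCmb2).add hCmb3
  have hCmbcs : HasCompactSupport Cmb := by
    refine hwcs.mono' fun t ht => ?_
    by_contra h
    obtain ⟨hz0, hz1, hz2⟩ := hvan t h
    simp [hCmb, dφ1, dφ2, dφ3, Function.mem_support, hz0, hz1, hz2] at ht
  have hsplit : ∀ t, g t ^ 2 = Tgt t + Cmb t := by
    intro t
    simp only [hCmb, dφ1, dφ2, dφ3, hTgt, hg, ha, hbb]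
    ring
  have step6 : (∫ t in Ioi b0, g t ^ 2) = ∫ t in Ioi b0, Tgt t := by
    rw [setIntegral_congr_fun measurableSet_Ioi (fun t _ => hsplit t),
      integral_add (hi Tgt hTgtcont hTgtcs) (hi Cmb hCmbcont hCmbcs)]
    have hcsmul : ∀ (c : ℝ) (F : ℝ → ℝ), HasCompactSupport F →
        HasCompactSupport fun t => c * F t := fun c F hF =>
      hF.mono' fun t ht => subset_closure (right_ne_zero_of_mul ht)
    have I1 : IntegrableOn (fun t => a * deriv φ1 t) (Ioi b0) :=
      hi _ hCmb1 (hcsmul a _ hφ1cs.deriv)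
    have I2 : IntegrableOn (fun t => (a * bb) * deriv φ2 t) (Ioi b0) :=
      hi _ hCmb2 (hcsmul (a * bb) _ hφ2cs.deriv)
    have I3 : IntegrableOn (fun t => (2 * bb) * deriv φ3 t) (Ioi b0) :=
      hi _ hCmb3 (hcsmul (2 * bb) _ hφ3cs.deriv)
    have : (∫ t in Ioi b0, Cmb t) = 0 := by
      have e : ∀ t, Cmb t = a * deriv φ1 t
          + ((a * bb) * deriv φ2 t + (2 * bb) * deriv φ3 t) := fun t => by
        rw [hCmb]; ring
      have I23 : IntegrableOn (fun t => (a * bb) * deriv φ2 t + (2 * bb) * deriv φ3 t)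
          (Ioi b0) := I2.add I3
      rw [setIntegral_congr_fun measurableSet_Ioi (fun t _ => e t),
        integral_add I1 I23, integral_add I2 I3,
        integral_const_mul, integral_const_mul, integral_const_mul, int1, int2, int3]
      ring
    rw [this, add_zero]
  calc (∫ x in Metric.ball (0 : EuclideanSpace ℝ (Fin N)) R,
      ‖x‖ ^ α * (deriv (deriv U) ‖x‖ + ((N : ℝ) - 1) / ‖x‖ * deriv U ‖x‖) ^ 2)
      = ∫ x : EuclideanSpace ℝ (Fin N), f ‖x‖ := step1
    _ = ((N : ℝ) * (volume (Metric.ball (0 : EuclideanSpace ℝ (Fin N)) 1)).toReal) *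
        ∫ y in Ioi (0 : ℝ), y ^ (N - 1) * f y := step2
    _ = ((N : ℝ) * (volume (Metric.ball (0 : EuclideanSpace ℝ (Fin N)) 1)).toReal) *
        ∫ t in Ioi b0, Tgt t := by
        rw [step3, step4, step5, step6]
    _ = _ := by rw [hTgt]
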